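/- arXiv:2210.14442 — 4 statements merged into one kernel-verified Lean document; each statement's English description precedes it below -/
import Mathlib

section
/- Let X be a metric space equipped with a Borel measure μ, let r₀ > 0 and r ≥ r₀, and let γ : [0, r] → X be a geodesic segment with γ(0) = p, i.e. dist(γ(s), γ(t)) = |s − t| for all s, t ∈ [0, r]. Suppose that μ(B(q, r₀)) ≥ v for every q ∈ X, where v > 0. Then μ(B(p, r)) ≥ (⌊(r − r₀)/(3r₀)⌋ + 1) · v. In particular the balls B(γ(3r₀·i), r₀) for 0 ≤ i ≤ ⌊(r − r₀)/(3r₀)⌋ are pairwise disjoint and all contained in B(p, r). -/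
open Metric MeasureTheory ENNReal

/-- Quantitative volume lower bound along a geodesic: disjoint balls of radius `r₀`
spaced `3 r₀` apart along a geodesic from `p` all lie inside `B(p, r)`, so
`μ (B(p,r)) ≥ (⌊(r - r₀)/(3 r₀)⌋ + 1) · v` when all `r₀`-balls have measure at least `v`. -/
theorem volume_lower_bound_along_geodesic {X : Type*} [MetricSpace X]
    [MeasurableSpace X] [BorelSpace X] (μ : Measure X)
    (r₀ r : ℝ) (hr₀ : 0 < r₀) (hr : r₀ ≤ r)
    (γ : ℝ → X) (p : X) (hp : γ 0 = p)
    (hγ : ∀ s ∈ Set.Icc (0 : ℝ) r, ∀ t ∈ Set.Icc (0 : ℝ) r, dist (γ s) (γ t) = |s - t|)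
    (v : ℝ≥0∞) (hv : 0 < v) (hball : ∀ q : X, v ≤ μ (ball q r₀)) :
    ((⌊(r - r₀) / (3 * r₀)⌋₊ + 1 : ℕ) : ℝ≥0∞) * v ≤ μ (ball p r) ∧
      (∀ i : ℕ, i ≤ ⌊(r - r₀) / (3 * r₀)⌋₊ → ball (γ (3 * r₀ * i)) r₀ ⊆ ball p r) ∧
      (∀ i j : ℕ, i ≤ ⌊(r - r₀) / (3 * r₀)⌋₊ → j ≤ ⌊(r - r₀) / (3 * r₀)⌋₊ → i ≠ j →
        Disjoint (ball (γ (3 * r₀ * i)) r₀) (ball (γ (3 * r₀ * j)) r₀)) := by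
  set N := ⌊(r - r₀) / (3 * r₀)⌋₊ with hN
  have h3 : (0:ℝ) < 3 * r₀ := by linarith
  have hle : ∀ i : ℕ, i ≤ N → 3 * r₀ * i ≤ r - r₀ := by
    intro i hi
    have h1 : (i:ℝ) ≤ (r - r₀) / (3 * r₀) := by
      calc (i:ℝ) ≤ (N:ℝ) := by exact_mod_cast hi
        _ ≤ (r - r₀) / (3 * r₀) := Nat.floor_le (div_nonneg (by linarith) h3.le)
    exact (le_div_iff₀' h3).mp h1
  have hmem : ∀ i : ℕ, i ≤ N → 3 * r₀ * i ∈ Set.Icc (0:ℝ) r := by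
    intro i hi
    exact ⟨by positivity, by linarith [hle i hi]⟩
  have hsub : ∀ i : ℕ, i ≤ N → ball (γ (3 * r₀ * i)) r₀ ⊆ ball p r := by
    intro i hi x hx
    rw [mem_ball] at hx ⊢
    have hd : dist (γ (3 * r₀ * i)) p = 3 * r₀ * i := by
      rw [← hp, hγ _ (hmem i hi) 0 ⟨le_refl 0, by linarith⟩]
      rw [sub_zero, abs_of_nonneg (by positivity)]
    have := (hmem i hi).2
    calc dist x p ≤ dist x (γ (3 * r₀ * i)) + dist (γ (3 * r₀ * i)) p := dist_triangle _ _ _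
      _ < r₀ + 3 * r₀ * i := by rw [hd]; linarith
      _ ≤ r := by linarith [hle i hi]
  have hdisj : ∀ i j : ℕ, i ≤ N → j ≤ N → i ≠ j →
      Disjoint (ball (γ (3 * r₀ * i)) r₀) (ball (γ (3 * r₀ * j)) r₀) := by
    intro i j hi hj hij
    apply ball_disjoint_ball
    rw [hγ _ (hmem i hi) _ (hmem j hj)]
    have : |3 * r₀ * (i:ℝ) - 3 * r₀ * j| = 3 * r₀ * |(i:ℝ) - j| := by
      rw [← mul_sub, abs_mul, abs_of_pos h3]
    rw [this]
    have h1 : (1:ℝ) ≤ |(i:ℝ) - j| := by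
      have h0 : ((i:ℤ) - j) ≠ 0 := sub_ne_zero.mpr (by exact_mod_cast hij)
      have h2 : (1:ℤ) ≤ |(i:ℤ) - j| := Int.one_le_abs h0
      calc (1:ℝ) ≤ |((i:ℤ) - j : ℤ)| := by exact_mod_cast h2
        _ = |(i:ℝ) - j| := by push_cast; ring_nf
    nlinarith
  refine ⟨?_, hsub, hdisj⟩
  calc ((N + 1 : ℕ) : ℝ≥0∞) * v = ∑ i ∈ Finset.range (N + 1), v := by
        simp [Finset.sum_const, mul_comm]
    _ ≤ ∑ i ∈ Finset.range (N + 1), μ (ball (γ (3 * r₀ * i)) r₀) :=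
        Finset.sum_le_sum fun i _ => hball _
    _ = μ (⋃ i ∈ Finset.range (N + 1), ball (γ (3 * r₀ * i)) r₀) := by
        rw [measure_biUnion_finset ?_ fun i _ => measurableSet_ball]
        intro i hi j hj hij
        exact hdisj i j (Nat.lt_succ_iff.mp (Finset.mem_range.mp hi))
          (Nat.lt_succ_iff.mp (Finset.mem_range.mp hj)) hij
    _ ≤ μ (ball p r) := by
        apply measure_mono
        intro x hx
        simp only [Set.mem_iUnion] at hx
        obtain ⟨i, hi, hx⟩ := hx
        exact hsub i (Nat.lt_succ_iff.mp (Finset.mem_range.mp hi)) hx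
end

section
/- Let X be a metric space equipped with a Borel measure μ. Assume: (i) X is a geodesic space, i.e. for all p, q ∈ X there exists a map γ : [0, dist(p,q)] → X with γ(0) = p, γ(dist(p,q)) = q and dist(γ(s), γ(t)) = |s − t| for all s, t; (ii) X is unbounded, i.e. for every p ∈ X and every r > 0 there exists q ∈ X with dist(p, q) ≥ r; (iii) there exist r₀ > 0 and v > 0 such that μ(B(q, r₀)) ≥ v for every q ∈ X. Then for every p ∈ X, liminf_{r → ∞} μ(B(p, r))/r ≥ v/(3r₀). -/
open Metric MeasureTheory ENNReal Filter

/-- A geodesic, unbounded metric measure space in which every ball of radius `r₀` has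
measure at least `v` has at least linear volume growth: for every `p`,
`liminf_{r → ∞} μ(B(p,r))/r ≥ v/(3 r₀)`. -/
theorem linear_volume_growth {X : Type*} [MetricSpace X]
    [MeasurableSpace X] [BorelSpace X] (μ : Measure X)
    (hgeo : ∀ p q : X, ∃ γ : ℝ → X, γ 0 = p ∧ γ (dist p q) = q ∧
      ∀ s ∈ Set.Icc (0 : ℝ) (dist p q), ∀ t ∈ Set.Icc (0 : ℝ) (dist p q),
        dist (γ s) (γ t) = |s - t|)
    (hunbdd : ∀ p : X, ∀ r : ℝ, ∃ q : X, r ≤ dist p q)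
    (r₀ v : ℝ) (hr₀ : 0 < r₀) (hv : 0 < v)
    (hball : ∀ q : X, ENNReal.ofReal v ≤ μ (ball q r₀)) (p : X) :
    ENNReal.ofReal (v / (3 * r₀)) ≤
      liminf (fun r : ℝ => μ (ball p r) / ENNReal.ofReal r) atTop := by
  have h3r₀ : (0:ℝ) < 3 * r₀ := by linarith
  -- Step 1: pointwise packing bound for all r ≥ r₀
  have key : ∀ r : ℝ, r₀ ≤ r →
      ENNReal.ofReal (v * (r - r₀) / (3 * r₀ * r)) ≤ μ (ball p r) / ENNReal.ofReal r := by
    intro r hr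
    have hrpos : 0 < r := lt_of_lt_of_le hr₀ hr
    set n : ℕ := ⌊(r - r₀) / (3 * r₀)⌋₊ + 1 with hn
    obtain ⟨q, hq⟩ := hunbdd p r
    obtain ⟨γ, hγ0, hγd, hγiso⟩ := hgeo p q
    have hx0 : (0:ℝ) ≤ (r - r₀) / (3 * r₀) := div_nonneg (by linarith) h3r₀.le
    have hbound : ∀ i : ℕ, i < n → 3 * r₀ * i ≤ r - r₀ := by
      intro i hi
      have hi' : (i:ℝ) ≤ ⌊(r - r₀) / (3 * r₀)⌋₊ := by
        exact_mod_cast Nat.le_of_lt_succ hi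
      have := Nat.floor_le hx0
      have h1 : (i:ℝ) ≤ (r - r₀) / (3 * r₀) := le_trans hi' this
      calc 3 * r₀ * i ≤ 3 * r₀ * ((r - r₀) / (3 * r₀)) := by
            exact mul_le_mul_of_nonneg_left h1 h3r₀.le
        _ = r - r₀ := by field_simp
    have hmem : ∀ i : ℕ, i < n → (3 * r₀ * i) ∈ Set.Icc (0:ℝ) (dist p q) := by
      intro i hi
      constructor
      · positivity
      · have := hbound i hi; linarith
    have h0mem : (0:ℝ) ∈ Set.Icc (0:ℝ) (dist p q) := ⟨le_refl _, dist_nonneg⟩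
    have hcenter : ∀ i : ℕ, i < n → dist p (γ (3 * r₀ * i)) = 3 * r₀ * i := by
      intro i hi
      have := hγiso 0 h0mem (3 * r₀ * i) (hmem i hi)
      rw [← hγ0] at *
      rw [this]
      rw [abs_of_nonpos (sub_nonpos.mpr (by positivity : (0:ℝ) ≤ 3 * r₀ * i))]
      ring
    have hsubset : ∀ i : ℕ, i < n → ball (γ (3 * r₀ * i)) r₀ ⊆ ball p r := by
      intro i hi x hx
      rw [mem_ball] at hx ⊢
      have h1 := hcenter i hi
      have h2 : dist x p ≤ dist x (γ (3 * r₀ * i)) + dist (γ (3 * r₀ * i)) p :=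
        dist_triangle _ _ _
      rw [dist_comm (γ (3 * r₀ * i)) p, h1] at h2
      have := hbound i hi
      linarith
    have hdisj : (↑(Finset.range n) : Set ℕ).PairwiseDisjoint
        (fun i => ball (γ (3 * r₀ * i)) r₀) := by
      intro i hi j hj hij
      simp only [Finset.coe_range, Set.mem_Iio] at hi hj
      apply Metric.ball_disjoint_ball
      rw [hγiso _ (hmem i hi) _ (hmem j hj)]
      have hij1 : (1:ℝ) ≤ |(i:ℝ) - (j:ℝ)| := by
        have : (i:ℝ) ≠ (j:ℝ) := by exact_mod_cast hij
        have h1 : (1:ℝ) ≤ |(i:ℤ) - (j:ℤ)| := by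
          have : (i:ℤ) - (j:ℤ) ≠ 0 := sub_ne_zero.mpr (by exact_mod_cast hij)
          exact_mod_cast Int.one_le_abs this
        calc (1:ℝ) ≤ |((i:ℤ) - (j:ℤ) : ℤ)| := by exact_mod_cast h1
          _ = |(i:ℝ) - (j:ℝ)| := by push_cast; ring_nf
      calc r₀ + r₀ ≤ 3 * r₀ * 1 := by linarith
        _ ≤ 3 * r₀ * |(i:ℝ) - (j:ℝ)| := by
            exact mul_le_mul_of_nonneg_left hij1 h3r₀.le
        _ = |3 * r₀ * i - 3 * r₀ * j| := by
            rw [← mul_sub, abs_mul, abs_of_nonneg h3r₀.le]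
    have hmeas : (n : ℝ≥0∞) * ENNReal.ofReal v ≤ μ (ball p r) := by
      calc (n : ℝ≥0∞) * ENNReal.ofReal v
          = ∑ _i ∈ Finset.range n, ENNReal.ofReal v := by
            simp [Finset.sum_const, nsmul_eq_mul]
        _ ≤ ∑ i ∈ Finset.range n, μ (ball (γ (3 * r₀ * i)) r₀) :=
            Finset.sum_le_sum fun i _ => hball _
        _ = μ (⋃ i ∈ Finset.range n, ball (γ (3 * r₀ * i)) r₀) :=
            (measure_biUnion_finset hdisj fun i _ => measurableSet_ball).symm
        _ ≤ μ (ball p r) := by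
            apply measure_mono
            refine Set.iUnion₂_subset fun i hi => ?_
            exact hsubset i (Finset.mem_range.mp hi)
    have hnv : (n : ℝ≥0∞) * ENNReal.ofReal v = ENNReal.ofReal (n * v) := by
      rw [ENNReal.ofReal_mul (by positivity), ENNReal.ofReal_natCast]
    have hineq : v * (r - r₀) / (3 * r₀ * r) ≤ (n : ℝ) * v / r := by
      have hfl : (r - r₀) / (3 * r₀) ≤ (n : ℝ) := (Nat.lt_floor_add_one _).le.trans
        (by exact_mod_cast le_refl (n:ℝ))
      have hfl' : (r - r₀) / (3 * r₀) < (n : ℝ) := by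
        have := Nat.lt_floor_add_one ((r - r₀) / (3 * r₀))
        exact_mod_cast this
      rw [div_le_div_iff₀ (by positivity) hrpos]
      have : v * (r - r₀) = v * (3 * r₀) * ((r - r₀) / (3 * r₀)) := by field_simp
      rw [this]
      calc v * (3 * r₀) * ((r - r₀) / (3 * r₀)) * r
          ≤ v * (3 * r₀) * (n : ℝ) * r := by
            have : v * (3 * r₀) * ((r - r₀) / (3 * r₀)) ≤ v * (3 * r₀) * (n : ℝ) :=
              mul_le_mul_of_nonneg_left hfl'.le (by positivity)
            exact mul_le_mul_of_nonneg_right this hrpos.le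
        _ = (n : ℝ) * v * (3 * r₀ * r) := by ring
    calc ENNReal.ofReal (v * (r - r₀) / (3 * r₀ * r))
        ≤ ENNReal.ofReal ((n : ℝ) * v / r) := ENNReal.ofReal_le_ofReal hineq
      _ = ENNReal.ofReal ((n : ℝ) * v) / ENNReal.ofReal r :=
          ENNReal.ofReal_div_of_pos hrpos
      _ = (n : ℝ≥0∞) * ENNReal.ofReal v / ENNReal.ofReal r := by
          rw [hnv]
      _ ≤ μ (ball p r) / ENNReal.ofReal r := by
          exact ENNReal.div_le_div_right hmeas _
  -- Step 2: the lower bound function tends to v / (3 r₀)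
  have htend : Tendsto (fun r : ℝ => v * (r - r₀) / (3 * r₀ * r)) atTop
      (nhds (v / (3 * r₀))) := by
    have h1 : Tendsto (fun r : ℝ => v / (3 * r₀) * (1 - r₀ * r⁻¹)) atTop
        (nhds (v / (3 * r₀) * (1 - r₀ * 0))) := by
      exact ((tendsto_const_nhds.sub (tendsto_inv_atTop_zero.const_mul r₀)).const_mul _)
    simp only [mul_zero, sub_zero, mul_one] at h1
    apply h1.congr'
    filter_upwards [eventually_gt_atTop 0] with r hr
    field_simp
  have htend' : Tendsto (fun r : ℝ => ENNReal.ofReal (v * (r - r₀) / (3 * r₀ * r))) atTop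
      (nhds (ENNReal.ofReal (v / (3 * r₀)))) :=
    (ENNReal.continuous_ofReal.tendsto _).comp htend
  calc ENNReal.ofReal (v / (3 * r₀))
      = liminf (fun r : ℝ => ENNReal.ofReal (v * (r - r₀) / (3 * r₀ * r))) atTop :=
        htend'.liminf_eq.symm
    _ ≤ liminf (fun r : ℝ => μ (ball p r) / ENNReal.ofReal r) atTop := by
        exact liminf_le_liminf (by
          filter_upwards [eventually_ge_atTop r₀] with r hr
          exact key r hr)
end

section
/- Fix R₀ > 0 and define ρ : ℝ → ℝ by ρ(x) = (3/(8R₀⁵))·x⁴ − (5/(4R₀³))·x² + 15/(8R₀) for |x| ≤ R₀, and ρ(x) = 1/|x| for |x| ≥ R₀. Then ρ is twice continuously differentiable on ℝ (of class C²) and ρ(x) > 0 for every x ∈ ℝ. -/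
open Set Filter

/-- The glued warping function: the quartic
`(3/(8R₀⁵))x⁴ − (5/(4R₀³))x² + 15/(8R₀)` for `|x| ≤ R₀`, and `1/|x|` for `|x| ≥ R₀`. -/
noncomputable def rho (R₀ : ℝ) : ℝ → ℝ := fun x =>
  if |x| ≤ R₀ then 3 / (8 * R₀ ^ 5) * x ^ 4 - 5 / (4 * R₀ ^ 3) * x ^ 2 + 15 / (8 * R₀)
  else 1 / |x|

/-- First derivative of `rho`. -/
noncomputable def rho1 (R₀ : ℝ) : ℝ → ℝ := fun x =>
  if |x| ≤ R₀ then 3 / (2 * R₀ ^ 5) * x ^ 3 - 5 / (2 * R₀ ^ 3) * x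
  else -x / |x| ^ 3

/-- Second derivative of `rho`. -/
noncomputable def rho2 (R₀ : ℝ) : ℝ → ℝ := fun x =>
  if |x| ≤ R₀ then 9 / (2 * R₀ ^ 5) * x ^ 2 - 5 / (2 * R₀ ^ 3)
  else 2 / |x| ^ 3

lemma hasDerivAt_glue {f g h : ℝ → ℝ} {a d : ℝ}
    (hf : HasDerivAt f d a) (hg : HasDerivAt g d a)
    (hfe : ∀ᶠ y in nhdsWithin a (Set.Iic a), h y = f y)
    (hge : ∀ᶠ y in nhdsWithin a (Set.Ici a), h y = g y) :
    HasDerivAt h d a := by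
  have ha : h a = f a := hfe.self_of_nhdsWithin (Set.mem_Iic.mpr le_rfl)
  have hb : h a = g a := hge.self_of_nhdsWithin (Set.mem_Ici.mpr le_rfl)
  have h1 : HasDerivWithinAt h d (Set.Iic a) a :=
    hf.hasDerivWithinAt.congr_of_eventuallyEq hfe ha
  have h2 : HasDerivWithinAt h d (Set.Ici a) a :=
    hg.hasDerivWithinAt.congr_of_eventuallyEq hge hb
  have h3 := h1.union h2
  rw [Set.Iic_union_Ici] at h3
  exact h3.hasDerivAt (by simp)

lemma continuousAt_glue {f g h : ℝ → ℝ} {a : ℝ}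
    (hf : ContinuousAt f a) (hg : ContinuousAt g a)
    (hfe : ∀ᶠ y in nhdsWithin a (Set.Iic a), h y = f y)
    (hge : ∀ᶠ y in nhdsWithin a (Set.Ici a), h y = g y) :
    ContinuousAt h a := by
  have ha : h a = f a := hfe.self_of_nhdsWithin (Set.mem_Iic.mpr le_rfl)
  have hb : h a = g a := hge.self_of_nhdsWithin (Set.mem_Ici.mpr le_rfl)
  have h1 : ContinuousWithinAt h (Set.Iic a) a :=
    hf.continuousWithinAt.congr_of_eventuallyEq hfe ha
  have h2 : ContinuousWithinAt h (Set.Ici a) a :=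
    hg.continuousWithinAt.congr_of_eventuallyEq hge hb
  have h3 := h1.union h2
  rw [Set.Iic_union_Ici] at h3
  rwa [continuousWithinAt_univ] at h3

section main
variable {R₀ : ℝ}

/-- The quartic piece. -/
noncomputable def q (R₀ : ℝ) : ℝ → ℝ := fun x =>
  3 / (8 * R₀ ^ 5) * x ^ 4 - 5 / (4 * R₀ ^ 3) * x ^ 2 + 15 / (8 * R₀)

noncomputable def q1 (R₀ : ℝ) : ℝ → ℝ := fun x =>
  3 / (2 * R₀ ^ 5) * x ^ 3 - 5 / (2 * R₀ ^ 3) * x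

noncomputable def q2 (R₀ : ℝ) : ℝ → ℝ := fun x =>
  9 / (2 * R₀ ^ 5) * x ^ 2 - 5 / (2 * R₀ ^ 3)

lemma q_hasDeriv (x : ℝ) : HasDerivAt (q R₀) (q1 R₀ x) x := by
  have h4 := hasDerivAt_pow 4 x
  have h2 := hasDerivAt_pow 2 x
  have h := ((h4.const_mul (3 / (8 * R₀ ^ 5))).sub
      (h2.const_mul (5 / (4 * R₀ ^ 3)))).add_const (15 / (8 * R₀))
  refine h.congr_deriv ?_
  simp [q1]
  ring

lemma q1_hasDeriv (x : ℝ) : HasDerivAt (q1 R₀) (q2 R₀ x) x := by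
  have h3 := hasDerivAt_pow 3 x
  have h1 := hasDerivAt_id x
  have h := (h3.const_mul (3 / (2 * R₀ ^ 5))).sub
      ((h1.const_mul (5 / (2 * R₀ ^ 3))))
  refine h.congr_deriv ?_
  simp [q2]
  ring

lemma rho_eq_q {x : ℝ} (hx : |x| ≤ R₀) : rho R₀ x = q R₀ x := if_pos hx
lemma rho1_eq_q1 {x : ℝ} (hx : |x| ≤ R₀) : rho1 R₀ x = q1 R₀ x := if_pos hx
lemma rho2_eq_q2 {x : ℝ} (hx : |x| ≤ R₀) : rho2 R₀ x = q2 R₀ x := if_pos hx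

lemma abs_R₀ (hR₀ : 0 < R₀) : |R₀| = R₀ := abs_of_pos hR₀
lemma abs_negR₀ (hR₀ : 0 < R₀) : |(-R₀)| = R₀ := by rw [abs_neg, abs_of_pos hR₀]

lemma rho_key1 (hR₀ : 0 < R₀) (x : ℝ) : HasDerivAt (rho R₀) (rho1 R₀ x) x := by
  rcases lt_trichotomy |x| R₀ with h | h | h
  · -- interior of the quartic region
    have hev : rho R₀ =ᶠ[nhds x] q R₀ := by
      filter_upwards [(isOpen_lt continuous_abs continuous_const).eventually_mem h] with y hy
      exact rho_eq_q (le_of_lt hy)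
    rw [rho1_eq_q1 h.le]
    exact (hev.hasDerivAt_iff).mpr (q_hasDeriv x)
  · -- boundary
    rcases (abs_eq hR₀.le).mp h with hx | hx
    · -- x = R₀
      rw [hx]
      have hq : q R₀ R₀ = R₀⁻¹ := by unfold q; field_simp; ring
      have hd1 : HasDerivAt (q R₀) (rho1 R₀ R₀) R₀ := by
        rw [rho1_eq_q1 (le_of_eq (abs_R₀ hR₀))]; exact q_hasDeriv R₀
      have hval : rho1 R₀ R₀ = -(R₀ ^ 2)⁻¹ := by
        rw [rho1_eq_q1 (le_of_eq (abs_R₀ hR₀))]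
        unfold q1; field_simp; ring
      have hd2 : HasDerivAt (fun y : ℝ => y⁻¹) (rho1 R₀ R₀) R₀ := by
        rw [hval]; exact hasDerivAt_inv hR₀.ne'
      refine hasDerivAt_glue hd1 hd2 ?_ ?_
      · have h1 : ∀ᶠ y in nhdsWithin R₀ (Set.Iic R₀), -R₀ < y :=
          (eventually_gt_nhds (by linarith)).filter_mono nhdsWithin_le_nhds
        filter_upwards [h1, eventually_mem_nhdsWithin] with y hy1 hy2
        exact rho_eq_q (abs_le.mpr ⟨hy1.le, hy2⟩)
      · filter_upwards [eventually_mem_nhdsWithin] with y (hy : R₀ ≤ y)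
        rcases eq_or_lt_of_le hy with rfl | hy'
        · rw [rho_eq_q (le_of_eq (abs_R₀ hR₀)), hq]
        · have hay : |y| = y := abs_of_pos (lt_trans hR₀ hy')
          rw [rho, if_neg (by rw [hay]; exact not_le.mpr hy'), hay, one_div]
    · -- x = -R₀
      rw [hx]
      have hq : q R₀ (-R₀) = R₀⁻¹ := by unfold q; field_simp; ring
      have hd2 : HasDerivAt (q R₀) (rho1 R₀ (-R₀)) (-R₀) := by
        rw [rho1_eq_q1 (le_of_eq (abs_negR₀ hR₀))]; exact q_hasDeriv (-R₀)
      have hval : rho1 R₀ (-R₀) = (R₀ ^ 2)⁻¹ := by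
        rw [rho1_eq_q1 (le_of_eq (abs_negR₀ hR₀))]
        unfold q1; field_simp; ring
      have hd1 : HasDerivAt (fun y : ℝ => -(y⁻¹)) (rho1 R₀ (-R₀)) (-R₀) := by
        rw [hval]
        have := (hasDerivAt_inv (x := -R₀) (by simpa using hR₀.ne')).neg
        refine this.congr_deriv ?_
        rw [neg_neg, neg_pow]; ring
      refine hasDerivAt_glue hd1 hd2 ?_ ?_
      · filter_upwards [eventually_mem_nhdsWithin] with y (hy : y ≤ -R₀)
        rcases eq_or_lt_of_le hy with rfl | hy'
        · rw [rho_eq_q (le_of_eq (abs_negR₀ hR₀)), hq, inv_neg, neg_neg]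
        · have hy0 : y < 0 := by linarith
          have hay : |y| = -y := abs_of_neg hy0
          rw [rho, if_neg (by rw [hay]; push_neg; linarith), hay]
          rw [one_div, ← inv_neg]
      · have h1 : ∀ᶠ y in nhdsWithin (-R₀) (Set.Ici (-R₀)), y < R₀ :=
          (eventually_lt_nhds (by linarith)).filter_mono nhdsWithin_le_nhds
        filter_upwards [h1, eventually_mem_nhdsWithin] with y hy1 hy2
        exact rho_eq_q (abs_le.mpr ⟨hy2, hy1.le⟩)
  · -- outside
    have hx0 : x ≠ 0 := by intro h0; rw [h0, abs_zero] at h; linarith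
    rcases lt_or_gt_of_ne hx0 with hneg | hpos
    · -- x < 0, so x < -R₀
      have hxR : x < -R₀ := by
        rw [abs_of_neg hneg] at h; linarith
      have hev : rho R₀ =ᶠ[nhds x] (fun y => -(y⁻¹)) := by
        filter_upwards [eventually_lt_nhds hxR] with y hy
        have hy0 : y < 0 := by linarith
        have hay : |y| = -y := abs_of_neg hy0
        rw [rho, if_neg (by rw [hay]; push_neg; linarith), hay]
        rw [one_div, ← inv_neg]
      have hval : rho1 R₀ x = (x ^ 2)⁻¹ := by
        rw [rho1, if_neg (not_le.mpr h), abs_of_neg hneg, neg_pow]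
        field_simp
      rw [hval]
      refine (hev.hasDerivAt_iff).mpr ?_
      have := (hasDerivAt_inv hx0).neg
      refine this.congr_deriv ?_
      ring
    · -- x > 0, so x > R₀
      have hxR : R₀ < x := by
        rw [abs_of_pos hpos] at h; linarith
      have hev : rho R₀ =ᶠ[nhds x] (fun y => y⁻¹) := by
        filter_upwards [eventually_gt_nhds hxR] with y hy
        have hay : |y| = y := abs_of_pos (lt_trans hR₀ hy)
        rw [rho, if_neg (by rw [hay]; exact not_le.mpr hy), hay, one_div]
      have hval : rho1 R₀ x = -(x ^ 2)⁻¹ := by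
        rw [rho1, if_neg (not_le.mpr h), abs_of_pos hpos]
        field_simp
      rw [hval]
      exact (hev.hasDerivAt_iff).mpr (hasDerivAt_inv hx0)

lemma rho_key2 (hR₀ : 0 < R₀) (x : ℝ) : HasDerivAt (rho1 R₀) (rho2 R₀ x) x := by
  rcases lt_trichotomy |x| R₀ with h | h | h
  · have hev : rho1 R₀ =ᶠ[nhds x] q1 R₀ := by
      filter_upwards [(isOpen_lt continuous_abs continuous_const).eventually_mem h] with y hy
      exact rho1_eq_q1 (le_of_lt hy)
    rw [rho2_eq_q2 h.le]
    exact (hev.hasDerivAt_iff).mpr (q1_hasDeriv x)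
  · rcases (abs_eq hR₀.le).mp h with hx | hx
    · -- x = R₀
      rw [hx]
      have hd1 : HasDerivAt (q1 R₀) (rho2 R₀ R₀) R₀ := by
        rw [rho2_eq_q2 (le_of_eq (abs_R₀ hR₀))]; exact q1_hasDeriv R₀
      have hval : rho2 R₀ R₀ = 2 / R₀ ^ 3 := by
        rw [rho2_eq_q2 (le_of_eq (abs_R₀ hR₀))]
        unfold q2; field_simp; ring
      have hd2 : HasDerivAt (fun y : ℝ => -((y ^ 2)⁻¹)) (rho2 R₀ R₀) R₀ := by
        rw [hval]
        have := ((hasDerivAt_pow 2 R₀).inv (pow_ne_zero 2 hR₀.ne')).neg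
        refine this.congr_deriv ?_
        push_cast
        field_simp
      refine hasDerivAt_glue hd1 hd2 ?_ ?_
      · have h1 : ∀ᶠ y in nhdsWithin R₀ (Set.Iic R₀), -R₀ < y :=
          (eventually_gt_nhds (by linarith)).filter_mono nhdsWithin_le_nhds
        filter_upwards [h1, eventually_mem_nhdsWithin] with y hy1 hy2
        exact rho1_eq_q1 (abs_le.mpr ⟨hy1.le, hy2⟩)
      · filter_upwards [eventually_mem_nhdsWithin] with y (hy : R₀ ≤ y)
        rcases eq_or_lt_of_le hy with rfl | hy'
        · rw [rho1_eq_q1 (le_of_eq (abs_R₀ hR₀))]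
          unfold q1; field_simp; ring
        · have hy0 : 0 < y := lt_trans hR₀ hy'
          have hay : |y| = y := abs_of_pos hy0
          rw [rho1, if_neg (by rw [hay]; exact not_le.mpr hy'), hay]
          rw [pow_succ]
          field_simp
    · -- x = -R₀
      rw [hx]
      have hd2 : HasDerivAt (q1 R₀) (rho2 R₀ (-R₀)) (-R₀) := by
        rw [rho2_eq_q2 (le_of_eq (abs_negR₀ hR₀))]; exact q1_hasDeriv (-R₀)
      have hval : rho2 R₀ (-R₀) = 2 / R₀ ^ 3 := by
        rw [rho2_eq_q2 (le_of_eq (abs_negR₀ hR₀))]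
        unfold q2; field_simp; ring
      have hd1 : HasDerivAt (fun y : ℝ => (y ^ 2)⁻¹) (rho2 R₀ (-R₀)) (-R₀) := by
        rw [hval]
        have := (hasDerivAt_pow 2 (-R₀)).inv (pow_ne_zero 2 (by simpa using hR₀.ne'))
        refine this.congr_deriv ?_
        push_cast
        rw [neg_pow, neg_pow]
        field_simp
      refine hasDerivAt_glue hd1 hd2 ?_ ?_
      · filter_upwards [eventually_mem_nhdsWithin] with y (hy : y ≤ -R₀)
        rcases eq_or_lt_of_le hy with rfl | hy'
        · rw [rho1_eq_q1 (le_of_eq (abs_negR₀ hR₀))]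
          rw [neg_pow]
          unfold q1; field_simp; ring
        · have hy0 : y < 0 := by linarith
          have hay : |y| = -y := abs_of_neg hy0
          rw [rho1, if_neg (by rw [hay]; push_neg; linarith), hay]
          rw [neg_pow]
          field_simp [hy0.ne]
      · have h1 : ∀ᶠ y in nhdsWithin (-R₀) (Set.Ici (-R₀)), y < R₀ :=
          (eventually_lt_nhds (by linarith)).filter_mono nhdsWithin_le_nhds
        filter_upwards [h1, eventually_mem_nhdsWithin] with y hy1 hy2
        exact rho1_eq_q1 (abs_le.mpr ⟨hy2, hy1.le⟩)
  · have hx0 : x ≠ 0 := by intro h0; rw [h0, abs_zero] at h; linarith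
    rcases lt_or_gt_of_ne hx0 with hneg | hpos
    · have hxR : x < -R₀ := by rw [abs_of_neg hneg] at h; linarith
      have hev : rho1 R₀ =ᶠ[nhds x] (fun y => (y ^ 2)⁻¹) := by
        filter_upwards [eventually_lt_nhds hxR] with y hy
        have hy0 : y < 0 := by linarith
        have hay : |y| = -y := abs_of_neg hy0
        rw [rho1, if_neg (by rw [hay]; push_neg; linarith), hay]
        rw [neg_pow]
        field_simp [hy0.ne]
      have hval : rho2 R₀ x = -(2 * x) / (x ^ 2) ^ 2 := by
        rw [rho2, if_neg (not_le.mpr h), abs_of_neg hneg, neg_pow]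
        field_simp
      rw [hval]
      refine (hev.hasDerivAt_iff).mpr ?_
      have := (hasDerivAt_pow 2 x).inv (pow_ne_zero 2 hx0)
      refine this.congr_deriv ?_
      push_cast
      ring
    · have hxR : R₀ < x := by rw [abs_of_pos hpos] at h; linarith
      have hev : rho1 R₀ =ᶠ[nhds x] (fun y => -((y ^ 2)⁻¹)) := by
        filter_upwards [eventually_gt_nhds hxR] with y hy
        have hay : |y| = y := abs_of_pos (lt_trans hR₀ hy)
        rw [rho1, if_neg (by rw [hay]; exact not_le.mpr hy), hay]
        rw [pow_succ]
        field_simp [(lt_trans hR₀ hy).ne']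
      have hval : rho2 R₀ x = 2 * x / (x ^ 2) ^ 2 := by
        rw [rho2, if_neg (not_le.mpr h), abs_of_pos hpos]
        field_simp
      rw [hval]
      refine (hev.hasDerivAt_iff).mpr ?_
      have := ((hasDerivAt_pow 2 x).inv (pow_ne_zero 2 hx0)).neg
      refine this.congr_deriv ?_
      push_cast
      ring

lemma rho2_continuous (hR₀ : 0 < R₀) : Continuous (rho2 R₀) := by
  rw [continuous_iff_continuousAt]
  intro x
  have hq2cont : ∀ y : ℝ, ContinuousAt (q2 R₀) y := by
    intro y; unfold q2; fun_prop
  have hgcont : ∀ y : ℝ, y ≠ 0 → ContinuousAt (fun z : ℝ => 2 / |z| ^ 3) y := by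
    intro y hy
    exact ContinuousAt.div continuousAt_const
      ((continuous_abs.continuousAt).pow 3) (pow_ne_zero 3 (abs_ne_zero.mpr hy))
  rcases lt_trichotomy |x| R₀ with h | h | h
  · have hev : ∀ᶠ y in nhds x, rho2 R₀ y = q2 R₀ y := by
      filter_upwards [(isOpen_lt continuous_abs continuous_const).eventually_mem h] with y hy
      exact rho2_eq_q2 (le_of_lt hy)
    exact (hq2cont x).congr (hev.mono fun y hy => hy.symm)
  · rcases (abs_eq hR₀.le).mp h with hx | hx
    · rw [hx]
      refine continuousAt_glue (hq2cont R₀) (hgcont R₀ hR₀.ne') ?_ ?_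
      · have h1 : ∀ᶠ y in nhdsWithin R₀ (Set.Iic R₀), -R₀ < y :=
          (eventually_gt_nhds (by linarith)).filter_mono nhdsWithin_le_nhds
        filter_upwards [h1, eventually_mem_nhdsWithin] with y hy1 hy2
        exact rho2_eq_q2 (abs_le.mpr ⟨hy1.le, hy2⟩)
      · filter_upwards [eventually_mem_nhdsWithin] with y (hy : R₀ ≤ y)
        rcases eq_or_lt_of_le hy with rfl | hy'
        · rw [rho2_eq_q2 (le_of_eq (abs_R₀ hR₀)), abs_R₀ hR₀]
          unfold q2; field_simp; ring
        · have hay : |y| = y := abs_of_pos (lt_trans hR₀ hy')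
          rw [rho2, if_neg (by rw [hay]; exact not_le.mpr hy')]
    · rw [hx]
      refine continuousAt_glue (hgcont (-R₀) (by simpa using hR₀.ne')) (hq2cont (-R₀)) ?_ ?_
      · filter_upwards [eventually_mem_nhdsWithin] with y (hy : y ≤ -R₀)
        rcases eq_or_lt_of_le hy with rfl | hy'
        · rw [rho2_eq_q2 (le_of_eq (abs_negR₀ hR₀)), abs_negR₀ hR₀]
          unfold q2; field_simp; ring
        · have hy0 : y < 0 := by linarith
          have hay : |y| = -y := abs_of_neg hy0
          rw [rho2, if_neg (by rw [hay]; push_neg; linarith)]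
      · have h1 : ∀ᶠ y in nhdsWithin (-R₀) (Set.Ici (-R₀)), y < R₀ :=
          (eventually_lt_nhds (by linarith)).filter_mono nhdsWithin_le_nhds
        filter_upwards [h1, eventually_mem_nhdsWithin] with y hy1 hy2
        exact rho2_eq_q2 (abs_le.mpr ⟨hy2, hy1.le⟩)
  · have hx0 : x ≠ 0 := by intro h0; rw [h0, abs_zero] at h; linarith
    have hev : ∀ᶠ y in nhds x, rho2 R₀ y = 2 / |y| ^ 3 := by
      filter_upwards [(isOpen_lt continuous_const continuous_abs).eventually_mem h] with y hy
      exact if_neg (not_le.mpr hy)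
    exact (hgcont x hx0).congr (hev.mono fun y hy => hy.symm)

end main

/-- The glued warping function `ρ` is of class `C²` and everywhere positive. -/
theorem rho_contDiff_and_pos (R₀ : ℝ) (hR₀ : 0 < R₀) :
    ContDiff ℝ 2 (rho R₀) ∧ ∀ x : ℝ, 0 < rho R₀ x := by
  constructor
  · have hd1 : deriv (rho R₀) = rho1 R₀ := funext fun x => (rho_key1 hR₀ x).deriv
    have hd2 : deriv (rho1 R₀) = rho2 R₀ := funext fun x => (rho_key2 hR₀ x).deriv
    rw [show (2 : WithTop ℕ∞) = 1 + 1 by norm_num, contDiff_succ_iff_deriv]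
    refine ⟨fun x => (rho_key1 hR₀ x).differentiableAt, by simp, ?_⟩
    rw [hd1, show (1 : WithTop ℕ∞) = 0 + 1 by norm_num, contDiff_succ_iff_deriv]
    refine ⟨fun x => (rho_key2 hR₀ x).differentiableAt, by simp, ?_⟩
    rw [hd2, contDiff_zero]
    exact rho2_continuous hR₀
  · intro x
    rcases le_or_gt |x| R₀ with h | h
    · rw [rho_eq_q h]
      have hx2 : x ^ 2 ≤ R₀ ^ 2 := by
        rcases abs_le.mp h with ⟨h1, h2⟩; nlinarith
      have hP : 0 < 3 * x ^ 4 - 10 * R₀ ^ 2 * x ^ 2 + 15 * R₀ ^ 4 := by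
        have h1 : 0 ≤ (R₀ ^ 2 - x ^ 2) * (7 * R₀ ^ 2 - 3 * x ^ 2) :=
          mul_nonneg (by linarith) (by nlinarith [sq_nonneg R₀])
        have h2 : 0 < R₀ ^ 4 := by positivity
        nlinarith [h1, h2]
      have hqx : q R₀ x = (3 * x ^ 4 - 10 * R₀ ^ 2 * x ^ 2 + 15 * R₀ ^ 4) / (8 * R₀ ^ 5) := by
        unfold q; field_simp; ring
      rw [hqx]
      exact div_pos hP (by positivity)
    · rw [rho, if_neg (not_le.mpr h)]
      have : 0 < |x| := lt_trans hR₀ h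
      positivity
end

section
/- Fix R₀ ≥ 100 and define ρ : ℝ → ℝ by ρ(x) = (3/(8R₀⁵))·x⁴ − (5/(4R₀³))·x² + 15/(8R₀) for |x| ≤ R₀, and ρ(x) = 1/|x| for |x| ≥ R₀ (a positive C² function). Then for every x ∈ ℝ, −4·ρ″(x)/ρ(x) + (2 − 2·ρ′(x)²)/ρ(x)² > 1. -/
set_option maxHeartbeats 1000000

noncomputable def rhoD (R₀ : ℝ) : ℝ → ℝ := fun x =>
  if |x| ≤ R₀ then 3 / (2 * R₀ ^ 5) * x ^ 3 - 5 / (2 * R₀ ^ 3) * x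
  else -x / |x| ^ 3

noncomputable def rhoDD (R₀ : ℝ) : ℝ → ℝ := fun x =>
  if |x| ≤ R₀ then 9 / (2 * R₀ ^ 5) * x ^ 2 - 5 / (2 * R₀ ^ 3)
  else 2 / |x| ^ 3

lemma rho_neg (R₀ x : ℝ) : rho R₀ (-x) = rho R₀ x := by
  unfold rho; rw [abs_neg]; split <;> ring

lemma rhoD_neg (R₀ x : ℝ) : rhoD R₀ (-x) = -rhoD R₀ x := by
  unfold rhoD; rw [abs_neg]; split <;> ring

lemma rhoDD_neg (R₀ x : ℝ) : rhoDD R₀ (-x) = rhoDD R₀ x := by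
  unfold rhoDD; rw [abs_neg]; split <;> ring

lemma rho_if_pos {R₀ x : ℝ} (h : |x| ≤ R₀) :
    rho R₀ x = 3 / (8 * R₀ ^ 5) * x ^ 4 - 5 / (4 * R₀ ^ 3) * x ^ 2 + 15 / (8 * R₀) := by
  simp only [rho]; rw [if_pos h]

lemma rho_if_neg {R₀ x : ℝ} (h : ¬ |x| ≤ R₀) : rho R₀ x = 1 / |x| := by
  simp only [rho]; rw [if_neg h]

lemma rhoD_if_pos {R₀ x : ℝ} (h : |x| ≤ R₀) :
    rhoD R₀ x = 3 / (2 * R₀ ^ 5) * x ^ 3 - 5 / (2 * R₀ ^ 3) * x := by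
  simp only [rhoD]; rw [if_pos h]

lemma rhoD_if_neg {R₀ x : ℝ} (h : ¬ |x| ≤ R₀) : rhoD R₀ x = -x / |x| ^ 3 := by
  simp only [rhoD]; rw [if_neg h]

lemma rhoDD_if_pos {R₀ x : ℝ} (h : |x| ≤ R₀) :
    rhoDD R₀ x = 9 / (2 * R₀ ^ 5) * x ^ 2 - 5 / (2 * R₀ ^ 3) := by
  simp only [rhoDD]; rw [if_pos h]

lemma rhoDD_if_neg {R₀ x : ℝ} (h : ¬ |x| ≤ R₀) : rhoDD R₀ x = 2 / |x| ^ 3 := by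
  simp only [rhoDD]; rw [if_neg h]

lemma hasDerivAt_rho (R₀ : ℝ) (hR : 100 ≤ R₀) (x : ℝ) :
    HasDerivAt (rho R₀) (rhoD R₀ x) x := by
  have hR0 : (0:ℝ) < R₀ := by linarith
  have hRne : R₀ ≠ 0 := ne_of_gt hR0
  have hquart : ∀ z : ℝ, HasDerivAt
      (fun y : ℝ => 3 / (8 * R₀ ^ 5) * y ^ 4 - 5 / (4 * R₀ ^ 3) * y ^ 2 + 15 / (8 * R₀))
      (3 / (2 * R₀ ^ 5) * z ^ 3 - 5 / (2 * R₀ ^ 3) * z) z := by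
    intro z
    have h1 := ((hasDerivAt_pow 4 z).const_mul (3 / (8 * R₀ ^ 5)))
    have h2 := ((hasDerivAt_pow 2 z).const_mul (5 / (4 * R₀ ^ 3)))
    have h3 := (h1.sub h2).add_const (15 / (8 * R₀))
    refine h3.congr_deriv ?_
    push_cast; ring
  have main : ∀ x : ℝ, 0 ≤ x → HasDerivAt (rho R₀) (rhoD R₀ x) x := by
    intro x hx
    rcases lt_trichotomy x R₀ with hlt | heq | hgt
    · have habs : |x| < R₀ := by rwa [abs_of_nonneg hx]
      have hev : ∀ᶠ y in nhds x, |y| < R₀ :=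
        (continuous_abs.continuousAt (x := x)).eventually_lt continuousAt_const habs
      have heq' : rho R₀ =ᶠ[nhds x] fun y : ℝ =>
          3 / (8 * R₀ ^ 5) * y ^ 4 - 5 / (4 * R₀ ^ 3) * y ^ 2 + 15 / (8 * R₀) := by
        filter_upwards [hev] with y hy
        exact rho_if_pos hy.le
      rw [rhoD_if_pos habs.le]
      exact heq'.hasDerivAt_iff.mpr (hquart x)
    · have hxpos : (0:ℝ) < x := by linarith
      have hxne : x ≠ 0 := ne_of_gt hxpos
      have habs : |x| ≤ R₀ := by rw [abs_of_nonneg hx, heq]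
      have hval : rhoD R₀ x = -(x ^ 2)⁻¹ := by
        rw [rhoD_if_pos habs, heq]; field_simp; ring
      rw [hval]
      have hleft : HasDerivWithinAt (rho R₀) (-(x ^ 2)⁻¹) (Set.Iic x) x := by
        have h := ((hquart x).hasDerivWithinAt (s := Set.Iic x))
        have hmem : {y : ℝ | -R₀ < y} ∈ nhds x := isOpen_Ioi.mem_nhds (by simp; linarith)
        have hev : ∀ᶠ y in nhdsWithin x (Set.Iic x), rho R₀ y =
            3 / (8 * R₀ ^ 5) * y ^ 4 - 5 / (4 * R₀ ^ 3) * y ^ 2 + 15 / (8 * R₀) := by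
          filter_upwards [eventually_nhdsWithin_of_eventually_nhds
              (Filter.eventually_of_mem hmem (fun y hy => hy)),
            eventually_mem_nhdsWithin] with y h1 h2
          have h2' : y ≤ R₀ := le_trans h2 (le_of_eq heq)
          exact rho_if_pos (abs_le.mpr ⟨le_of_lt h1, h2'⟩)
        have h' := h.congr_of_eventuallyEq hev (rho_if_pos habs)
        refine h'.congr_deriv ?_
        rw [heq]; field_simp; ring
      have hright : HasDerivWithinAt (rho R₀) (-(x ^ 2)⁻¹) (Set.Ici x) x := by
        have hinv : HasDerivAt (fun y : ℝ => y⁻¹) (-(x ^ 2)⁻¹) x := hasDerivAt_inv hxne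
        have h := hinv.hasDerivWithinAt (s := Set.Ici x)
        refine h.congr (fun y hy => ?_) ?_
        · rcases eq_or_lt_of_le (Set.mem_Ici.mp hy) with h1 | h1
          · rw [← h1, rho_if_pos habs, heq]; field_simp; ring
          · have hy0 : (0:ℝ) < y := by linarith
            have : ¬ |y| ≤ R₀ := by rw [abs_of_pos hy0]; linarith [heq ▸ h1]
            rw [rho_if_neg this, abs_of_pos hy0, one_div]
        · rw [rho_if_pos habs, heq]; field_simp; ring
      have hu := hleft.union hright
      rwa [Set.Iic_union_Ici, hasDerivWithinAt_univ] at hu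
    · have hx0 : 0 < x := by linarith
      have hev : ∀ᶠ y in nhds x, R₀ < y := Filter.eventually_of_mem
        (isOpen_Ioi.mem_nhds hgt) (fun y hy => hy)
      have heq' : rho R₀ =ᶠ[nhds x] fun y : ℝ => y⁻¹ := by
        filter_upwards [hev] with y h1
        have hy0 : (0:ℝ) < y := by linarith
        have : ¬ |y| ≤ R₀ := by rw [abs_of_pos hy0]; linarith
        rw [rho_if_neg this, abs_of_pos hy0, one_div]
      have hxabs : ¬ |x| ≤ R₀ := by rw [abs_of_pos hx0]; linarith
      have hval : rhoD R₀ x = -(x ^ 2)⁻¹ := by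
        rw [rhoD_if_neg hxabs, abs_of_pos hx0]
        field_simp
      rw [hval]
      exact heq'.hasDerivAt_iff.mpr (hasDerivAt_inv (ne_of_gt hx0))
  rcases le_or_gt 0 x with hx | hx
  · exact main x hx
  · have h := (main (-x) (by linarith)).comp x (hasDerivAt_neg x)
    have h2 : HasDerivAt (fun y : ℝ => rho R₀ (-y)) (rhoD R₀ (-x) * (-1)) x := h
    simp only [rho_neg, rhoD_neg, neg_mul, neg_neg, one_mul, mul_neg_one] at h2
    exact h2

lemma hasDerivAt_rhoD (R₀ : ℝ) (hR : 100 ≤ R₀) (x : ℝ) :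
    HasDerivAt (rhoD R₀) (rhoDD R₀ x) x := by
  have hR0 : (0:ℝ) < R₀ := by linarith
  have hRne : R₀ ≠ 0 := ne_of_gt hR0
  have hcub : ∀ z : ℝ, HasDerivAt
      (fun y : ℝ => 3 / (2 * R₀ ^ 5) * y ^ 3 - 5 / (2 * R₀ ^ 3) * y)
      (9 / (2 * R₀ ^ 5) * z ^ 2 - 5 / (2 * R₀ ^ 3)) z := by
    intro z
    have h1 := ((hasDerivAt_pow 3 z).const_mul (3 / (2 * R₀ ^ 5)))
    have h2 := ((hasDerivAt_id z).const_mul (5 / (2 * R₀ ^ 3)))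
    have h3 := h1.sub h2
    refine h3.congr_deriv ?_
    push_cast; ring
  have hnegsq : ∀ z : ℝ, z ≠ 0 → HasDerivAt (fun y : ℝ => -(y ^ 2)⁻¹) (2 * z / (z ^ 2) ^ 2) z := by
    intro z hz
    have h := ((hasDerivAt_pow 2 z).inv (pow_ne_zero 2 hz)).neg
    refine h.congr_deriv ?_
    push_cast; field_simp
  have main : ∀ x : ℝ, 0 ≤ x → HasDerivAt (rhoD R₀) (rhoDD R₀ x) x := by
    intro x hx
    rcases lt_trichotomy x R₀ with hlt | heq | hgt
    · have habs : |x| < R₀ := by rwa [abs_of_nonneg hx]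
      have hev : ∀ᶠ y in nhds x, |y| < R₀ :=
        (continuous_abs.continuousAt (x := x)).eventually_lt continuousAt_const habs
      have heq' : rhoD R₀ =ᶠ[nhds x] fun y : ℝ =>
          3 / (2 * R₀ ^ 5) * y ^ 3 - 5 / (2 * R₀ ^ 3) * y := by
        filter_upwards [hev] with y hy
        exact rhoD_if_pos hy.le
      rw [rhoDD_if_pos habs.le]
      exact heq'.hasDerivAt_iff.mpr (hcub x)
    · have hxpos : (0:ℝ) < x := by linarith
      have hxne : x ≠ 0 := ne_of_gt hxpos
      have habs : |x| ≤ R₀ := by rw [abs_of_nonneg hx, heq]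
      have hval : rhoDD R₀ x = 2 * x / (x ^ 2) ^ 2 := by
        rw [rhoDD_if_pos habs, heq]; field_simp; ring
      rw [hval]
      have hleft : HasDerivWithinAt (rhoD R₀) (2 * x / (x ^ 2) ^ 2) (Set.Iic x) x := by
        have h := ((hcub x).hasDerivWithinAt (s := Set.Iic x))
        have hmem : {y : ℝ | -R₀ < y} ∈ nhds x := isOpen_Ioi.mem_nhds (by simp; linarith)
        have hev : ∀ᶠ y in nhdsWithin x (Set.Iic x), rhoD R₀ y =
            3 / (2 * R₀ ^ 5) * y ^ 3 - 5 / (2 * R₀ ^ 3) * y := by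
          filter_upwards [eventually_nhdsWithin_of_eventually_nhds
              (Filter.eventually_of_mem hmem (fun y hy => hy)),
            eventually_mem_nhdsWithin] with y h1 h2
          have h2' : y ≤ R₀ := le_trans h2 (le_of_eq heq)
          exact rhoD_if_pos (abs_le.mpr ⟨le_of_lt h1, h2'⟩)
        have h' := h.congr_of_eventuallyEq hev (rhoD_if_pos habs)
        refine h'.congr_deriv ?_
        rw [heq]; field_simp; ring
      have hright : HasDerivWithinAt (rhoD R₀) (2 * x / (x ^ 2) ^ 2) (Set.Ici x) x := by
        have h := (hnegsq x hxne).hasDerivWithinAt (s := Set.Ici x)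
        refine h.congr (fun y hy => ?_) ?_
        · rcases eq_or_lt_of_le (Set.mem_Ici.mp hy) with h1 | h1
          · rw [← h1, rhoD_if_pos habs, heq]; field_simp; ring
          · have hy0 : (0:ℝ) < y := by linarith
            have : ¬ |y| ≤ R₀ := by rw [abs_of_pos hy0]; linarith [heq ▸ h1]
            rw [rhoD_if_neg this, abs_of_pos hy0]
            field_simp
        · rw [rhoD_if_pos habs, heq]; field_simp; ring
      have hu := hleft.union hright
      rwa [Set.Iic_union_Ici, hasDerivWithinAt_univ] at hu
    · have hx0 : 0 < x := by linarith
      have hev : ∀ᶠ y in nhds x, R₀ < y := Filter.eventually_of_mem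
        (isOpen_Ioi.mem_nhds hgt) (fun y hy => hy)
      have heq' : rhoD R₀ =ᶠ[nhds x] fun y : ℝ => -(y ^ 2)⁻¹ := by
        filter_upwards [hev] with y h1
        have hy0 : (0:ℝ) < y := by linarith
        have : ¬ |y| ≤ R₀ := by rw [abs_of_pos hy0]; linarith
        rw [rhoD_if_neg this, abs_of_pos hy0]
        field_simp
      have hxabs : ¬ |x| ≤ R₀ := by rw [abs_of_pos hx0]; linarith
      have hval : rhoDD R₀ x = 2 * x / (x ^ 2) ^ 2 := by
        rw [rhoDD_if_neg hxabs, abs_of_pos hx0]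
        field_simp
      rw [hval]
      exact heq'.hasDerivAt_iff.mpr (hnegsq x (ne_of_gt hx0))
  rcases le_or_gt 0 x with hx | hx
  · exact main x hx
  · have h := (main (-x) (by linarith)).comp x (hasDerivAt_neg x)
    have h2 : HasDerivAt (fun y : ℝ => rhoD R₀ (-y)) (rhoDD R₀ (-x) * (-1)) x := h
    simp only [rhoD_neg, rhoDD_neg, mul_neg_one] at h2
    have h3 := h2.neg
    simpa [Pi.neg_def] using h3

/-- For `R₀ ≥ 100`, the scalar curvature `R = −4ρ″/ρ + (2 − 2ρ′²)/ρ²` of the warped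
product metric `dr² + ρ(r)² ds₂²` on `ℝ × S²` is everywhere greater than `1`. -/
theorem rho_scalar_curvature_gt_one (R₀ : ℝ) (hR₀ : 100 ≤ R₀) :
    ∀ x : ℝ,
      1 < -4 * deriv (deriv (rho R₀)) x / rho R₀ x +
            (2 - 2 * (deriv (rho R₀) x) ^ 2) / (rho R₀ x) ^ 2 := by
  intro x
  have hR0 : (0:ℝ) < R₀ := by linarith
  have hRne : R₀ ≠ 0 := ne_of_gt hR0
  have hD : deriv (rho R₀) = rhoD R₀ := funext fun y => (hasDerivAt_rho R₀ hR₀ y).deriv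
  have hDD : deriv (rhoD R₀) x = rhoDD R₀ x := (hasDerivAt_rhoD R₀ hR₀ x).deriv
  rw [hD, hDD]
  by_cases h : |x| ≤ R₀
  · rw [rho_if_pos h, rhoD_if_pos h, rhoDD_if_pos h]
    obtain ⟨hx1, hx2⟩ := abs_le.mp h
    have ht : x ^ 2 ≤ R₀ ^ 2 := sq_le_sq' hx1 hx2
    have hPfac : 0 ≤ (R₀ ^ 2 - x ^ 2) * (7 * R₀ ^ 2 - 3 * x ^ 2) :=
      mul_nonneg (by linarith) (by nlinarith [sq_nonneg x])
    have hPpos : 0 < 3 * x ^ 4 - 10 * R₀ ^ 2 * x ^ 2 + 15 * R₀ ^ 4 := by nlinarith [pow_pos hR0 4]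
    have hρne : 3 / (8 * R₀ ^ 5) * x ^ 4 - 5 / (4 * R₀ ^ 3) * x ^ 2 + 15 / (8 * R₀) ≠ 0 := by
      have : 3 / (8 * R₀ ^ 5) * x ^ 4 - 5 / (4 * R₀ ^ 3) * x ^ 2 + 15 / (8 * R₀)
          = (3 * x ^ 4 - 10 * R₀ ^ 2 * x ^ 2 + 15 * R₀ ^ 4) / (8 * R₀ ^ 5) := by
        field_simp; ring
      rw [this]
      positivity
    have e1 : 3 / (8 * R₀ ^ 5) * x ^ 4 - 5 / (4 * R₀ ^ 3) * x ^ 2 + 15 / (8 * R₀)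
        = (3 * x ^ 4 - 10 * R₀ ^ 2 * x ^ 2 + 15 * R₀ ^ 4) / (8 * R₀ ^ 5) := by
      field_simp; ring
    have e2 : 9 / (2 * R₀ ^ 5) * x ^ 2 - 5 / (2 * R₀ ^ 3)
        = (9 * x ^ 2 - 5 * R₀ ^ 2) / (2 * R₀ ^ 5) := by
      field_simp
    have e3 : 3 / (2 * R₀ ^ 5) * x ^ 3 - 5 / (2 * R₀ ^ 3) * x
        = (3 * x ^ 3 - 5 * R₀ ^ 2 * x) / (2 * R₀ ^ 5) := by
      field_simp
    have hrw : -4 * (9 / (2 * R₀ ^ 5) * x ^ 2 - 5 / (2 * R₀ ^ 3)) /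
          (3 / (8 * R₀ ^ 5) * x ^ 4 - 5 / (4 * R₀ ^ 3) * x ^ 2 + 15 / (8 * R₀)) +
          (2 - 2 * (3 / (2 * R₀ ^ 5) * x ^ 3 - 5 / (2 * R₀ ^ 3) * x) ^ 2) /
          (3 / (8 * R₀ ^ 5) * x ^ 4 - 5 / (4 * R₀ ^ 3) * x ^ 2 + 15 / (8 * R₀)) ^ 2
        = (128 * R₀ ^ 10 - 16 * (9 * x ^ 2 - 5 * R₀ ^ 2) *
            (3 * x ^ 4 - 10 * R₀ ^ 2 * x ^ 2 + 15 * R₀ ^ 4)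
            - 32 * (3 * x ^ 3 - 5 * R₀ ^ 2 * x) ^ 2) /
          (3 * x ^ 4 - 10 * R₀ ^ 2 * x ^ 2 + 15 * R₀ ^ 4) ^ 2 := by
      rw [e1, e2, e3]
      field_simp [hPpos.ne']
      ring
    rw [hrw, lt_div_iff₀ (by positivity)]
    have hPle : 3 * x ^ 4 - 10 * R₀ ^ 2 * x ^ 2 + 15 * R₀ ^ 4 ≤ 18 * R₀ ^ 4 := by
      nlinarith [sq_nonneg x, sq_nonneg R₀]
    have hP2 : (3 * x ^ 4 - 10 * R₀ ^ 2 * x ^ 2 + 15 * R₀ ^ 4) ^ 2 ≤ 324 * R₀ ^ 8 := by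
      nlinarith [hPpos, hPle]
    have hSle : 9 * x ^ 2 - 5 * R₀ ^ 2 ≤ 4 * R₀ ^ 2 := by nlinarith
    have hSP : 16 * ((9 * x ^ 2 - 5 * R₀ ^ 2) *
        (3 * x ^ 4 - 10 * R₀ ^ 2 * x ^ 2 + 15 * R₀ ^ 4)) ≤ 1152 * R₀ ^ 6 := by
      have h1 : (9 * x ^ 2 - 5 * R₀ ^ 2) *
          (3 * x ^ 4 - 10 * R₀ ^ 2 * x ^ 2 + 15 * R₀ ^ 4) ≤
          4 * R₀ ^ 2 * (3 * x ^ 4 - 10 * R₀ ^ 2 * x ^ 2 + 15 * R₀ ^ 4) :=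
        mul_le_mul_of_nonneg_right hSle hPpos.le
      have h2 : 4 * R₀ ^ 2 * (3 * x ^ 4 - 10 * R₀ ^ 2 * x ^ 2 + 15 * R₀ ^ 4) ≤
          4 * R₀ ^ 2 * (18 * R₀ ^ 4) :=
        mul_le_mul_of_nonneg_left hPle (by positivity)
      nlinarith
    have hQfac : (3 * x ^ 2 - 5 * R₀ ^ 2) ^ 2 ≤ 25 * R₀ ^ 4 := by
      nlinarith [sq_nonneg x, sq_nonneg (x^2)]
    have hQ : 32 * (3 * x ^ 3 - 5 * R₀ ^ 2 * x) ^ 2 ≤ 800 * R₀ ^ 6 := by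
      have h1 : (3 * x ^ 3 - 5 * R₀ ^ 2 * x) ^ 2 = x ^ 2 * (3 * x ^ 2 - 5 * R₀ ^ 2) ^ 2 := by
        ring
      rw [h1]
      have h2 : x ^ 2 * (3 * x ^ 2 - 5 * R₀ ^ 2) ^ 2 ≤ R₀ ^ 2 * (25 * R₀ ^ 4) := by
        have := mul_le_mul ht hQfac (sq_nonneg _) (sq_nonneg R₀)
        linarith
      nlinarith
    have hm1 : 10000 * R₀ ^ 6 ≤ R₀ ^ 8 := by nlinarith [pow_pos hR0 6, pow_le_pow_left₀ (by norm_num : (0:ℝ) ≤ 100) hR₀ 2]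
    have hm2 : 10000 * R₀ ^ 8 ≤ R₀ ^ 10 := by nlinarith [pow_pos hR0 8, pow_le_pow_left₀ (by norm_num : (0:ℝ) ≤ 100) hR₀ 2]
    nlinarith [hP2, hSP, hQ, hm1, hm2, pow_pos hR0 10]
  · rw [rho_if_neg h, rhoD_if_neg h, rhoDD_if_neg h]
    have hm : R₀ < |x| := not_le.mp h
    have hmpos : (0:ℝ) < |x| := by linarith
    have hmne : |x| ≠ 0 := ne_of_gt hmpos
    set m := |x| with hmdef
    have hx2 : x ^ 2 = m ^ 2 := (sq_abs x).symm
    have h2 : (-x / m ^ 3) ^ 2 = m ^ 2 / m ^ 6 := by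
      rw [div_pow, neg_sq, hx2]; ring_nf
    have hrw : -4 * (2 / m ^ 3) / (1 / m) + (2 - 2 * (-x / m ^ 3) ^ 2) / (1 / m) ^ 2
        = 2 * m ^ 2 - 10 / m ^ 2 := by
      rw [h2]; field_simp; ring
    rw [hrw]
    have h1 : 10 / |x| ^ 2 ≤ 1 := by
      rw [div_le_one (by positivity)]
      nlinarith
    nlinarith
end
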